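/- Let a ≥ 1 and N ≥ 2 be integers and let p ∈ ℂ[w] be a polynomial with p(0) = 0 and deg p ≤ a−1. Set μ = min{2a, a + ord(p), ord(p² + w^N)}, with the convention ord(0) = +∞ (so μ is a finite positive integer). Then for all complex numbers c outside a finite subset of ℂ, the w-adic order of the power series (p(w) + c·w^a)² + w^N equals μ. Moreover, if p ≠ 0 or N < 2a, then μ ≤ 2a − 1. -/

import Mathlib

open PowerSeries

/-- For a polynomial p with p(0) = 0 and deg p ≤ a−1, and for general c ∈ ℂ, the w-adic
order of (p(w) + c·wᵃ)² + wᴺ equals μ = min {2a, a + ord p, ord (p² + wᴺ)}; moreover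
μ ≤ 2a − 1 if p ≠ 0 or N < 2a. -/
theorem stmt_2 (a N : ℕ) (ha : 1 ≤ a) (hN : 2 ≤ N) (p : Polynomial ℂ)
    (hp0 : p.coeff 0 = 0) (hpdeg : p.natDegree ≤ a - 1) :
    ∀ μ : ℕ∞,
      μ = min ((2 * a : ℕ) : ℕ∞)
            (min (((a : ℕ∞)) + PowerSeries.order (p : PowerSeries ℂ))
                 (PowerSeries.order ((p : PowerSeries ℂ) ^ 2 + X ^ N))) →
      (∃ S : Finset ℂ, ∀ c : ℂ, c ∉ S →
          PowerSeries.order (((p : PowerSeries ℂ) + PowerSeries.C c * X ^ a) ^ 2 + X ^ N)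
            = μ) ∧
      ((p ≠ 0 ∨ N < 2 * a) → μ ≤ ((2 * a - 1 : ℕ) : ℕ∞)) := by
  intro μ hμ
  have hμ2a : μ ≤ ((2 * a : ℕ) : ℕ∞) := hμ ▸ min_le_left _ _
  have hμne : μ ≠ ⊤ := ne_top_of_le_ne_top (ENat.coe_ne_top _) hμ2a
  obtain ⟨k, rfl⟩ : ∃ k : ℕ, μ = (k : ℕ∞) := ⟨μ.toNat, (ENat.coe_toNat hμne).symm⟩
  have hk2a : k ≤ 2 * a := by exact_mod_cast hμ2a
  have hkm : (k : ℕ∞) ≤ (a : ℕ∞) + PowerSeries.order (p : PowerSeries ℂ) := by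
    rw [hμ]; exact le_trans (min_le_right _ _) (min_le_left _ _)
  have hkt : (k : ℕ∞) ≤ PowerSeries.order ((p : PowerSeries ℂ) ^ 2 + X ^ N) := by
    rw [hμ]; exact le_trans (min_le_right _ _) (min_le_right _ _)
  -- coefficient vanishing below k
  have L1 : ∀ n : ℕ, n < k → (p ^ 2 + Polynomial.X ^ N).coeff n = 0 := by
    intro n hn
    have h0 : (PowerSeries.coeff n) ((p : PowerSeries ℂ) ^ 2 + X ^ N) = 0 :=
      PowerSeries.coeff_of_lt_order n (lt_of_lt_of_le (by exact_mod_cast hn) hkt)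
    have hcoe : ((p : PowerSeries ℂ) ^ 2 + X ^ N)
        = ((p ^ 2 + Polynomial.X ^ N : Polynomial ℂ) : PowerSeries ℂ) := by
      simp [Polynomial.coe_add, Polynomial.coe_pow, Polynomial.coe_X]
    rw [hcoe, Polynomial.coeff_coe] at h0
    exact h0
  have L2 : ∀ n : ℕ, n < k → p.coeff (n - a) = 0 := by
    intro n hn
    by_cases hna : n < a
    · have h0 : n - a = 0 := by omega
      rw [h0]; exact hp0
    · push_neg at hna
      have h1 : ((n - a : ℕ) : ℕ∞) < PowerSeries.order (p : PowerSeries ℂ) := by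
        have hn' : (n : ℕ∞) < (a : ℕ∞) + PowerSeries.order (p : PowerSeries ℂ) :=
          lt_of_lt_of_le (by exact_mod_cast hn) hkm
        have hsum : (n : ℕ∞) = (a : ℕ∞) + ((n - a : ℕ) : ℕ∞) := by
          rw [← Nat.cast_add]; congr 1; omega
        rw [hsum] at hn'
        exact lt_of_add_lt_add_left hn'
      have h2 := PowerSeries.coeff_of_lt_order (n - a) h1
      rwa [Polynomial.coeff_coe] at h2
  -- coefficient formula
  have key : ∀ (c : ℂ) (n : ℕ),
      ((p + Polynomial.C c * Polynomial.X ^ a) ^ 2 + Polynomial.X ^ N).coeff n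
        = (p ^ 2 + Polynomial.X ^ N).coeff n
          + 2 * c * (if a ≤ n then p.coeff (n - a) else 0)
          + c ^ 2 * (if n = 2 * a then 1 else 0) := by
    intro c n
    have hexp : (p + Polynomial.C c * Polynomial.X ^ a) ^ 2 + Polynomial.X ^ N
        = ((p ^ 2 + Polynomial.X ^ N) + Polynomial.C (2 * c) * (p * Polynomial.X ^ a))
          + Polynomial.C (c ^ 2) * Polynomial.X ^ (2 * a) := by
      have hC2 : Polynomial.C (2 : ℂ) = 2 := by
        simpa using Polynomial.C_eq_natCast (R := ℂ) 2
      have h2c : Polynomial.C (2 * c) = 2 * Polynomial.C c := by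
        rw [Polynomial.C_mul, hC2]
      have hc2 : Polynomial.C (c ^ 2) = Polynomial.C c ^ 2 := by
        rw [Polynomial.C_pow]
      rw [h2c, hc2]; ring
    have e1 : (Polynomial.C (2 * c) * (p * Polynomial.X ^ a)).coeff n
        = 2 * c * (if a ≤ n then p.coeff (n - a) else 0) := by
      rw [Polynomial.coeff_C_mul, Polynomial.coeff_mul_X_pow']
    have e2 : (Polynomial.C (c ^ 2) * Polynomial.X ^ (2 * a)).coeff n
        = c ^ 2 * (if n = 2 * a then 1 else 0) := by
      rw [Polynomial.coeff_C_mul, Polynomial.coeff_X_pow]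
    rw [hexp, Polynomial.coeff_add, Polynomial.coeff_add, e1, e2]
  -- data of the critical coefficient polynomial
  obtain ⟨A, hA⟩ : ∃ A : ℂ, A = (p ^ 2 + Polynomial.X ^ N).coeff k := ⟨_, rfl⟩
  obtain ⟨B, hB⟩ : ∃ B : ℂ, B = p.coeff (k - a) := ⟨_, rfl⟩
  obtain ⟨D, hD⟩ : ∃ D : ℂ, D = (if k = 2 * a then (1 : ℂ) else 0) := ⟨_, rfl⟩
  obtain ⟨Q, hQ⟩ : ∃ Q : Polynomial ℂ, Q = Polynomial.C A + Polynomial.C (2 * B) * Polynomial.X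
      + Polynomial.C D * Polynomial.X ^ 2 := ⟨_, rfl⟩
  have hQcoeff0 : Q.coeff 0 = A := by simp [hQ]
  have hQcoeff1 : Q.coeff 1 = 2 * B := by simp [hQ]
  have hQcoeff2 : Q.coeff 2 = D := by simp [hQ]
  -- Q is not the zero polynomial
  have hQne : Q ≠ 0 := by
    by_cases hk2a' : k = 2 * a
    · intro h
      have h0 : Q.coeff 2 = 0 := by rw [h]; simp
      rw [hQcoeff2, hD, if_pos hk2a'] at h0
      exact one_ne_zero h0
    · have hklt : k < 2 * a := lt_of_le_of_ne hk2a hk2a'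
      have hkmin : (k : ℕ∞) = min ((a : ℕ∞) + PowerSeries.order (p : PowerSeries ℂ))
          (PowerSeries.order ((p : PowerSeries ℂ) ^ 2 + X ^ N)) := by
        rcases min_cases ((2 * a : ℕ) : ℕ∞)
          (min ((a : ℕ∞) + PowerSeries.order (p : PowerSeries ℂ))
            (PowerSeries.order ((p : PowerSeries ℂ) ^ 2 + X ^ N))) with ⟨h1, h2⟩ | ⟨h1, h2⟩
        · exfalso
          rw [h1] at hμ
          have : k = 2 * a := by exact_mod_cast hμ
          omega
        · rw [h1] at hμ; exact hμ
      rcases le_total ((a : ℕ∞) + PowerSeries.order (p : PowerSeries ℂ))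
          (PowerSeries.order ((p : PowerSeries ℂ) ^ 2 + X ^ N)) with hle | hle
      · have hkeq : (k : ℕ∞) = (a : ℕ∞) + PowerSeries.order (p : PowerSeries ℂ) := by
          rw [hkmin, min_eq_left hle]
        have hone : PowerSeries.order (p : PowerSeries ℂ) ≠ ⊤ := by
          intro h; rw [h] at hkeq; simp at hkeq
        lift PowerSeries.order (p : PowerSeries ℂ) to ℕ using hone with m hm
        have hkam : k = a + m := by exact_mod_cast hkeq
        have hcoeffm : (PowerSeries.coeff m) (p : PowerSeries ℂ) ≠ 0 :=
          (PowerSeries.order_eq_nat.mp hm.symm).1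
        have hBne : B ≠ 0 := by
          rw [hB]
          have h0 : k - a = m := by omega
          rw [h0]
          rwa [Polynomial.coeff_coe] at hcoeffm
        intro h
        have h0 : Q.coeff 1 = 0 := by rw [h]; simp
        rw [hQcoeff1] at h0
        exact hBne (by simpa using h0)
      · have hkeq : (k : ℕ∞) = PowerSeries.order ((p : PowerSeries ℂ) ^ 2 + X ^ N) := by
          rw [hkmin, min_eq_right hle]
        have hAne : A ≠ 0 := by
          have h0 := (PowerSeries.order_eq_nat.mp hkeq.symm).1
          have hcoe : ((p : PowerSeries ℂ) ^ 2 + X ^ N)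
              = ((p ^ 2 + Polynomial.X ^ N : Polynomial ℂ) : PowerSeries ℂ) := by
            simp [Polynomial.coe_add, Polynomial.coe_pow, Polynomial.coe_X]
          rw [hcoe, Polynomial.coeff_coe] at h0
          rw [hA]; exact h0
        intro h
        have h0 : Q.coeff 0 = 0 := by rw [h]; simp
        rw [hQcoeff0] at h0
        exact hAne h0
  constructor
  · -- the finite exceptional set
    refine ⟨Q.roots.toFinset, fun c hc => ?_⟩
    have hQc : Q.eval c ≠ 0 := by
      intro h
      exact hc (Multiset.mem_toFinset.mpr ((Polynomial.mem_roots hQne).mpr (by simpa using h)))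
    have hQeval : Q.eval c = A + 2 * B * c + D * c ^ 2 := by
      rw [hQ]
      simp only [Polynomial.eval_add, Polynomial.eval_mul, Polynomial.eval_C,
        Polynomial.eval_X, Polynomial.eval_pow]
    have hcoe : ((p : PowerSeries ℂ) + PowerSeries.C c * X ^ a) ^ 2 + X ^ N
        = (((p + Polynomial.C c * Polynomial.X ^ a) ^ 2 + Polynomial.X ^ N : Polynomial ℂ)
            : PowerSeries ℂ) := by
      simp [Polynomial.coe_add, Polynomial.coe_mul, Polynomial.coe_pow,
        Polynomial.coe_C, Polynomial.coe_X]
    rw [hcoe, PowerSeries.order_eq_nat]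
    constructor
    · rw [Polynomial.coeff_coe, key c k]
      have hite : (if a ≤ k then p.coeff (k - a) else 0) = B := by
        by_cases h1 : a ≤ k
        · rw [if_pos h1, hB]
        · rw [if_neg h1, hB]
          have h0 : k - a = 0 := by omega
          rw [h0, hp0]
      rw [hite, ← hA, ← hD]
      intro h
      apply hQc
      rw [hQeval, ← h]; ring
    · intro i hi
      rw [Polynomial.coeff_coe, key c i, L1 i hi]
      have h2 : (if a ≤ i then p.coeff (i - a) else 0) = 0 := by
        by_cases h1 : a ≤ i
        · rw [if_pos h1]; exact L2 i hi
        · rw [if_neg h1]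
      have h3 : i ≠ 2 * a := by omega
      rw [h2, if_neg h3]; ring
  · -- the bound μ ≤ 2a - 1
    intro hor
    by_cases hpz : p = 0
    · rcases hor with h | h
      · exact absurd hpz h
      · have hTord : PowerSeries.order ((p : PowerSeries ℂ) ^ 2 + X ^ N) = (N : ℕ∞) := by
          rw [hpz]
          simp [PowerSeries.order_X_pow]
        rw [hμ]
        calc min ((2 * a : ℕ) : ℕ∞)
              (min ((a : ℕ∞) + PowerSeries.order (p : PowerSeries ℂ))
                (PowerSeries.order ((p : PowerSeries ℂ) ^ 2 + X ^ N)))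
            ≤ PowerSeries.order ((p : PowerSeries ℂ) ^ 2 + X ^ N) :=
              le_trans (min_le_right _ _) (min_le_right _ _)
          _ = (N : ℕ∞) := hTord
          _ ≤ ((2 * a - 1 : ℕ) : ℕ∞) := by exact_mod_cast (by omega : N ≤ 2 * a - 1)
    · have hPord : PowerSeries.order (p : PowerSeries ℂ) ≤ (p.natDegree : ℕ∞) := by
        apply PowerSeries.order_le
        rw [Polynomial.coeff_coe]
        exact Polynomial.leadingCoeff_ne_zero.mpr hpz
      rw [hμ]
      calc min ((2 * a : ℕ) : ℕ∞)
            (min ((a : ℕ∞) + PowerSeries.order (p : PowerSeries ℂ))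
              (PowerSeries.order ((p : PowerSeries ℂ) ^ 2 + X ^ N)))
          ≤ (a : ℕ∞) + PowerSeries.order (p : PowerSeries ℂ) :=
            le_trans (min_le_right _ _) (min_le_left _ _)
        _ ≤ (a : ℕ∞) + (p.natDegree : ℕ∞) := add_le_add le_rfl hPord
        _ = ((a + p.natDegree : ℕ) : ℕ∞) := by push_cast; ring
        _ ≤ ((2 * a - 1 : ℕ) : ℕ∞) := by
            exact_mod_cast (by omega : a + p.natDegree ≤ 2 * a - 1)
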